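/- Along the flow Ė = −P_S(uvᵀ) + ⟨E, P_S(uvᵀ)⟩E with ‖E‖_F = 1 and σ > 0 simple, the following are equivalent: (1) σ̇ = 0; (2) Ė = 0; (3) E is a real scalar multiple of P_S(uvᵀ). -/

import Mathlib

open Matrix

/-- Frobenius inner product of two real matrices. -/
def frob {α β : Type*} [Fintype α] [Fintype β] (A B : Matrix α β ℝ) : ℝ :=
  ∑ i, ∑ j, A i j * B i j

lemma frob_comm {α β : Type*} [Fintype α] [Fintype β] (A B : Matrix α β ℝ) :
    frob A B = frob B A := by simp [frob, mul_comm]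

lemma frob_sub_left {α β : Type*} [Fintype α] [Fintype β] (A B C : Matrix α β ℝ) :
    frob (A - B) C = frob A C - frob B C := by
  simp [frob, sub_mul, Finset.sum_sub_distrib]

lemma frob_add_left {α β : Type*} [Fintype α] [Fintype β] (A B C : Matrix α β ℝ) :
    frob (A + B) C = frob A C + frob B C := by
  simp [frob, add_mul, Finset.sum_add_distrib]

lemma frob_neg_left {α β : Type*} [Fintype α] [Fintype β] (A B : Matrix α β ℝ) :
    frob (-A) B = -frob A B := by
  simp [frob, Finset.sum_neg_distrib]

lemma frob_smul_left {α β : Type*} [Fintype α] [Fintype β] (r : ℝ) (A B : Matrix α β ℝ) :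
    frob (r • A) B = r * frob A B := by
  simp [frob, Finset.mul_sum, mul_assoc]

lemma frob_add_right {α β : Type*} [Fintype α] [Fintype β] (A B C : Matrix α β ℝ) :
    frob A (B + C) = frob A B + frob A C := by
  rw [frob_comm, frob_add_left, frob_comm B, frob_comm C]

lemma frob_neg_right {α β : Type*} [Fintype α] [Fintype β] (A B : Matrix α β ℝ) :
    frob A (-B) = -frob A B := by
  rw [frob_comm, frob_neg_left, frob_comm]

lemma frob_smul_right {α β : Type*} [Fintype α] [Fintype β] (r : ℝ) (A B : Matrix α β ℝ) :
    frob A (r • B) = r * frob A B := by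
  rw [frob_comm, frob_smul_left, frob_comm]

lemma frob_self_nonneg {α β : Type*} [Fintype α] [Fintype β] (A : Matrix α β ℝ) :
    0 ≤ frob A A :=
  Finset.sum_nonneg fun i _ => Finset.sum_nonneg fun j _ => mul_self_nonneg _

lemma frob_self_eq_zero {α β : Type*} [Fintype α] [Fintype β] {A : Matrix α β ℝ}
    (h : frob A A = 0) : A = 0 := by
  ext i j
  have h1 := (Finset.sum_eq_zero_iff_of_nonneg
    (fun i _ => Finset.sum_nonneg fun j _ => mul_self_nonneg (A i j))).mp h i (Finset.mem_univ i)
  have h2 := (Finset.sum_eq_zero_iff_of_nonneg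
    (fun j _ => mul_self_nonneg (A i j))).mp h1 j (Finset.mem_univ j)
  have := mul_self_eq_zero.mp h2
  simpa using this

theorem stationary_point_characterization (p q : ℕ)
    (S : Submodule ℝ (Matrix (Fin p) (Fin q) ℝ))
    (Shat : Matrix (Fin p) (Fin q) ℝ) (hShat : Shat ∈ S)
    (σ : ℝ) (hσ : 0 < σ)
    (u : Fin p → ℝ) (v : Fin q → ℝ) (hu : u ⬝ᵥ u = 1) (hv : v ⬝ᵥ v = 1)
    (hsv : Shat.mulVec v = σ • u) (hus : Matrix.vecMul u Shat = σ • v)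
    (E P : Matrix (Fin p) (Fin q) ℝ)
    (hE : E ∈ S) (hEnorm : frob E E = 1)
    (hPmem : P ∈ S) (hPorth : ∀ Q ∈ S, frob (Matrix.vecMulVec u v - P) Q = 0)
    (ε : ℝ) (hε : 0 < ε) :
    (ε * ((frob E P) ^ 2 - frob P P) = 0 ↔ -P + frob E P • E = 0) ∧
      (-P + frob E P • E = 0 ↔ ∃ r : ℝ, E = r • P) := by
  -- frob (uvᵀ) Shat = σ
  have huv : frob (Matrix.vecMulVec u v) Shat = σ := by
    have hrow : ∀ i, ∑ j, Shat i j * v j = σ * u i := by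
      intro i
      have := congrFun hsv i
      simpa [Matrix.mulVec, dotProduct] using this
    calc frob (Matrix.vecMulVec u v) Shat
        = ∑ i, u i * ∑ j, Shat i j * v j := by
          simp only [frob, Matrix.vecMulVec, Matrix.of_apply, Finset.mul_sum]
          exact Finset.sum_congr rfl fun i _ => Finset.sum_congr rfl fun j _ => by ring
      _ = ∑ i, u i * (σ * u i) := by simp [hrow]
      _ = σ * (u ⬝ᵥ u) := by
          simp only [dotProduct, Finset.mul_sum]
          exact Finset.sum_congr rfl fun i _ => by ring
      _ = σ := by rw [hu, mul_one]
  have hPS : frob P Shat = σ := by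
    have h := hPorth Shat hShat
    rw [frob_sub_left] at h
    linarith [huv]
  have hPne : P ≠ 0 := by
    intro h
    rw [h] at hPS
    simp [frob] at hPS
    exact hσ.ne hPS
  have hPP : 0 < frob P P := by
    rcases lt_or_eq_of_le (frob_self_nonneg P) with h | h
    · exact h
    · exact absurd (frob_self_eq_zero h.symm) hPne
  set c := frob E P with hc
  have hkey : ε * (c ^ 2 - frob P P) = 0 ↔ -P + c • E = 0 := by
    constructor
    · intro h
      have hcc : c ^ 2 = frob P P := by
        have := mul_eq_zero.mp h
        rcases this with h' | h'
        · exact absurd h' hε.ne'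
        · linarith
      have hD : frob (-P + c • E) (-P + c • E) = 0 := by
        have expand : frob (-P + c • E) (-P + c • E)
            = frob P P - 2 * c * frob E P + c ^ 2 * frob E E := by
          rw [frob_add_left, frob_add_right, frob_add_right,
            frob_neg_left, frob_neg_left, frob_neg_right, frob_neg_right,
            frob_smul_left, frob_smul_left, frob_smul_right, frob_smul_right,
            frob_comm P E]
          ring
        rw [expand, hEnorm, ← hc]
        nlinarith [hcc]
      exact frob_self_eq_zero hD
    · intro h
      have hPeq : P = c • E := by
        have := congrArg (fun M => M + P) h
        simpa [add_comm] using this.symm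
      have h1 : frob P P = c ^ 2 := by
        rw [hPeq, frob_smul_left, frob_comm, frob_smul_left, hEnorm]
        ring
      rw [h1]; ring
  refine ⟨hkey, ?_⟩
  constructor
  · intro h
    have hPeq : P = c • E := by
      have := congrArg (fun M => M + P) h
      simpa [add_comm] using this.symm
    have hcne : c ≠ 0 := by
      intro h0
      rw [h0, zero_smul] at hPeq
      exact hPne hPeq
    refine ⟨1 / c, ?_⟩
    rw [hPeq, smul_smul]
    field_simp
    rw [one_smul]
  · rintro ⟨r, rfl⟩
    have h1 : r * r * frob P P = 1 := by
      have := hEnorm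
      rw [frob_smul_left, frob_comm, frob_smul_left] at this
      linarith
    have hcr : c = r * frob P P := by
      rw [hc, frob_smul_left]
    rw [hcr, smul_smul]
    have : r * frob P P * r = 1 := by ring_nf; ring_nf at h1; linarith
    rw [this, one_smul]
    simp
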